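/- Let β ∈ KL and suppose a nonnegative function v : ℝ≥0 → ℝ≥0 satisfies, for every 0 < c < 1, v(t) ≤ β(v(0), (1−c)t) + ρ∘ρ̄⁻¹(sup_{τ ≥ ct} v(τ)) for all t ≥ 0, where ρ∘ρ̄⁻¹(s) < s for s > 0, and v is bounded. Then v(t) → 0 as t → ∞. -/

import Mathlib

open Filter Set

/-- A class-K function (on `[0,∞)`). -/
def ClassK (γ : ℝ → ℝ) : Prop :=
  ContinuousOn γ (Set.Ici 0) ∧ StrictMonoOn γ (Set.Ici 0) ∧ γ 0 = 0 ∧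
    ∀ s, 0 ≤ s → 0 ≤ γ s

/-- A class-K∞ function. -/
def ClassKInf (γ : ℝ → ℝ) : Prop :=
  ClassK γ ∧ Filter.Tendsto γ Filter.atTop Filter.atTop

/-- A class-KL function: class-K in the first argument for each fixed time,
decreasing to zero in the second argument for each fixed first argument. -/
def ClassKL (β : ℝ → ℝ → ℝ) : Prop :=
  (∀ t, 0 ≤ t → ClassK (fun s => β s t)) ∧
  (∀ s, 0 ≤ s → AntitoneOn (fun t => β s t) (Set.Ici 0) ∧
      Filter.Tendsto (fun t => β s t) Filter.atTop (nhds 0))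

/-- Small-gain / asymptotic-gain step (cf. Lemma A.1 of Jiang–Teel–Praly):
if a bounded nonnegative `v` satisfies, for every `0 < c < 1` and all `t ≥ 0`,
`v(t) ≤ β(v(0), (1−c)t) + ρ(ρ̄⁻¹(sup_{τ ≥ ct} v(τ)))`, where `β ∈ KL` and
`ρ∘ρ̄⁻¹(s) < s` for `s > 0`, then `v(t) → 0` as `t → ∞`. -/
theorem small_gain_convergence
    (β : ℝ → ℝ → ℝ) (hβ : ClassKL β)
    (ρ ρbarInv : ℝ → ℝ)
    (hρ : ClassKInf ρ) (hρbarInv : ClassKInf ρbarInv)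
    (hsg : ∀ s : ℝ, 0 < s → ρ (ρbarInv s) < s)
    (v : ℝ → ℝ)
    (hv_nonneg : ∀ t, 0 ≤ v t)
    (hv_bdd : BddAbove (Set.range v))
    (hbound : ∀ c : ℝ, c ∈ Set.Ioo (0:ℝ) 1 → ∀ t : ℝ, 0 ≤ t →
      v t ≤ β (v 0) ((1 - c) * t) + ρ (ρbarInv (sSup (v '' Set.Ici (c * t))))) :
    Tendsto v atTop (nhds 0) := by
  set g : ℝ → ℝ := fun s => ρ (ρbarInv s) with hg
  set S : ℝ → ℝ := fun T => sSup (v '' Set.Ici T) with hSdef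
  have hBdd : ∀ T : ℝ, BddAbove (v '' Set.Ici T) := fun T =>
    hv_bdd.mono (Set.image_subset_range v _)
  have hne : ∀ T : ℝ, (v '' Set.Ici T).Nonempty := fun T =>
    ⟨v T, Set.mem_image_of_mem v Set.self_mem_Ici⟩
  have hS_le : ∀ T t : ℝ, T ≤ t → v t ≤ S T := fun T t ht =>
    le_csSup (hBdd T) (Set.mem_image_of_mem v ht)
  have hS_nonneg : ∀ T, 0 ≤ S T := fun T =>
    le_trans (hv_nonneg T) (hS_le T T le_rfl)
  have hS_anti : Antitone S := fun T₁ T₂ h =>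
    csSup_le_csSup (hBdd T₁) (hne T₂) (Set.image_mono (f := v) (Set.Ici_subset_Ici.2 h))
  have hS_tendsto : Tendsto S atTop (nhds (⨅ T, S T)) :=
    tendsto_atTop_ciInf hS_anti ⟨0, fun x ⟨T, hT⟩ => hT ▸ hS_nonneg T⟩
  set ℓ : ℝ := ⨅ T, S T with hℓ
  have hℓ_nonneg : 0 ≤ ℓ := le_ciInf hS_nonneg
  -- monotonicity of g on Ici 0
  have hρbarInv_nonneg : ∀ s, 0 ≤ s → 0 ≤ ρbarInv s := hρbarInv.1.2.2.2
  have hg_mono : ∀ s₁ s₂, 0 ≤ s₁ → s₁ ≤ s₂ → g s₁ ≤ g s₂ := by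
    intro s₁ s₂ h1 h12
    have h2 : (0:ℝ) ≤ s₂ := le_trans h1 h12
    have := hρbarInv.1.2.1.monotoneOn h1 h2 h12
    exact hρ.1.2.1.monotoneOn (hρbarInv_nonneg _ h1) (hρbarInv_nonneg _ h2) this
  -- key inequality
  have hkey : ∀ T : ℝ, 0 ≤ T → S T ≤ β (v 0) ((1/2) * T) + g (S ((1/2) * T)) := by
    intro T hT
    apply csSup_le (hne T)
    rintro x ⟨t, ht, rfl⟩
    have ht' : T ≤ t := ht
    have ht0 : (0:ℝ) ≤ t := le_trans hT ht'
    have h1 := hbound (1/2) ⟨by norm_num, by norm_num⟩ t ht0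
    have e : (1 - 1/2 : ℝ) * t = (1/2) * t := by ring
    rw [e] at h1
    refine h1.trans (add_le_add ?_ ?_)
    · exact (hβ.2 (v 0) (hv_nonneg 0)).1 (Set.mem_Ici.2 (by positivity))
        (Set.mem_Ici.2 (by positivity)) (by nlinarith)
    · exact hg_mono _ _ (hS_nonneg _) (hS_anti (by nlinarith))
  -- continuity of g within Ici 0
  have hg_cont : ContinuousOn g (Set.Ici 0) :=
    hρ.1.1.comp hρbarInv.1.1 (fun s hs => hρbarInv_nonneg s hs)
  have hShalf : Tendsto (fun T : ℝ => S ((1/2) * T)) atTop (nhds ℓ) :=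
    hS_tendsto.comp (tendsto_atTop_atTop_of_monotone
      (fun a b hab => by nlinarith) (fun b => ⟨2 * b, by nlinarith⟩))
  have hgS : Tendsto (fun T : ℝ => g (S ((1/2) * T))) atTop (nhds (g ℓ)) := by
    have hc : ContinuousWithinAt g (Set.Ici 0) ℓ := hg_cont ℓ hℓ_nonneg
    exact hc.tendsto.comp (tendsto_nhdsWithin_of_tendsto_nhds_of_eventually_within _
      hShalf (Filter.Eventually.of_forall fun T => hS_nonneg _))
  have hβ0 : Tendsto (fun T : ℝ => β (v 0) ((1/2) * T)) atTop (nhds 0) :=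
    (hβ.2 (v 0) (hv_nonneg 0)).2.comp (tendsto_atTop_atTop_of_monotone
      (fun a b hab => by nlinarith) (fun b => ⟨2 * b, by nlinarith⟩))
  have hrhs : Tendsto (fun T : ℝ => β (v 0) ((1/2) * T) + g (S ((1/2) * T)))
      atTop (nhds (0 + g ℓ)) := hβ0.add hgS
  have hle : ℓ ≤ 0 + g ℓ :=
    le_of_tendsto_of_tendsto hS_tendsto hrhs
      ((eventually_ge_atTop (0:ℝ)).mono fun T hT => hkey T hT)
  have hℓ0 : ℓ = 0 := by
    by_contra h
    have hpos : 0 < ℓ := lt_of_le_of_ne hℓ_nonneg (Ne.symm h)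
    have := hsg ℓ hpos
    rw [zero_add] at hle
    exact absurd hle (not_le.2 this)
  rw [hℓ0] at hS_tendsto
  exact tendsto_of_tendsto_of_tendsto_of_le_of_le' tendsto_const_nhds hS_tendsto
    (Filter.Eventually.of_forall hv_nonneg)
    (Filter.Eventually.of_forall fun t => hS_le t t le_rfl)
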